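/- Let f : {0,1}^n → {0,1} be a monotone read-once DNF with m terms each containing exactly n/m variables (so every variable appears in exactly one term). Under unit costs and an arbitrary probability vector p ∈ (0,1)^n, there is a non-adaptive strategy S whose expected cost is at most m · OPT_A(f, unit costs, p). -/

import Mathlib

open Finset

/-- The set of tested indices `T` determines `f` on input `x`:
every input agreeing with `x` on `T` gives the same function value. -/
def Determines (n : ℕ) (f : (Fin n → Bool) → Bool) (T : Finset (Fin n))
    (x : Fin n → Bool) : Prop :=
  ∀ x' : Fin n → Bool, (∀ i ∈ T, x' i = x i) → f x' = f x

/-- The set of indices tested by the non-adaptive strategy `π` in its first `k` tests. -/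
def prefixSet (n : ℕ) (π : Equiv.Perm (Fin n)) (k : ℕ) : Finset (Fin n) :=
  Finset.univ.filter (fun i => (π.symm i).val < k)

/-- The number of tests performed by the non-adaptive strategy `π` on input `x`:
the least `k` such that the first `k` tested indices determine `f` on `x`. -/
noncomputable def naSteps (n : ℕ) (f : (Fin n → Bool) → Bool)
    (π : Equiv.Perm (Fin n)) (x : Fin n → Bool) : ℕ :=
  sInf {k : ℕ | Determines n f (prefixSet n π k) x}

/-- The cost incurred by the non-adaptive strategy `π` on input `x`, with cost vector `c`. -/
noncomputable def naCost (n : ℕ) (f : (Fin n → Bool) → Bool) (c : Fin n → ℝ)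
    (π : Equiv.Perm (Fin n)) (x : Fin n → Bool) : ℝ :=
  ∑ i ∈ prefixSet n π (naSteps n f π x), c i

/-- Probability of the outcome `x` under the product distribution with parameters `p`. -/
def prodWeight (n : ℕ) (p : Fin n → ℝ) (x : Fin n → Bool) : ℝ :=
  ∏ i : Fin n, if x i then p i else 1 - p i

/-- Expected cost of the non-adaptive strategy `π`. -/
noncomputable def naExpCost (n : ℕ) (f : (Fin n → Bool) → Bool) (c : Fin n → ℝ)
    (p : Fin n → ℝ) (π : Equiv.Perm (Fin n)) : ℝ :=
  ∑ x : Fin n → Bool, prodWeight n p x * naCost n f c π x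

/-- Optimal expected cost among non-adaptive strategies. -/
noncomputable def OPTN (n : ℕ) (f : (Fin n → Bool) → Bool) (c : Fin n → ℝ)
    (p : Fin n → ℝ) : ℝ :=
  sInf { r : ℝ | ∃ π : Equiv.Perm (Fin n), r = naExpCost n f c p π }

/-- Binary decision trees over `n` variables (adaptive strategies). -/
inductive DecTree (n : ℕ) : Type
  | leaf : Bool → DecTree n
  | node : Fin n → DecTree n → DecTree n → DecTree n

/-- Evaluation of a decision tree on an input. -/
def DecTree.eval {n : ℕ} : DecTree n → (Fin n → Bool) → Bool
  | .leaf b, _ => b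
  | .node i t0 t1, x => if x i then DecTree.eval t1 x else DecTree.eval t0 x

/-- Cost of a decision tree on input `x`: the sum of the costs of the indices
labeling the internal nodes on the root-to-leaf path followed on `x`. -/
def DecTree.costOn {n : ℕ} (c : Fin n → ℝ) : DecTree n → (Fin n → Bool) → ℝ
  | .leaf _, _ => 0
  | .node i t0 t1, x =>
      c i + (if x i then DecTree.costOn c t1 x else DecTree.costOn c t0 x)

/-- The decision tree `t` computes the function `f`. -/
def DecTree.Computes {n : ℕ} (t : DecTree n) (f : (Fin n → Bool) → Bool) : Prop :=
  ∀ x, t.eval x = f x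

/-- Expected cost of an adaptive strategy (decision tree). -/
noncomputable def adExpCost (n : ℕ) (c : Fin n → ℝ) (p : Fin n → ℝ)
    (t : DecTree n) : ℝ :=
  ∑ x : Fin n → Bool, prodWeight n p x * DecTree.costOn c t x

/-- Optimal expected cost among adaptive strategies computing `f`. -/
noncomputable def OPTA (n : ℕ) (f : (Fin n → Bool) → Bool) (c : Fin n → ℝ)
    (p : Fin n → ℝ) : ℝ :=
  sInf { r : ℝ | ∃ t : DecTree n, DecTree.Computes t f ∧ r = adExpCost n c p t }

/-- `f` is the monotone read-once DNF whose terms are the (nonempty, pairwise disjoint)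
sets of variables `T 0, …, T (m-1)`. -/
def IsReadOnceDNF (n m : ℕ) (T : Fin m → Finset (Fin n))
    (f : (Fin n → Bool) → Bool) : Prop :=
  (∀ j, (T j).Nonempty) ∧
  (∀ j k, j ≠ k → Disjoint (T j) (T k)) ∧
  (∀ x, f x = true ↔ ∃ j, ∀ i ∈ T j, x i = true)

namespace SBFE

def pathVars {n : ℕ} : DecTree n → (Fin n → Bool) → Finset (Fin n)
  | .leaf _, _ => ∅
  | .node i t0 t1, x => insert i (if x i then pathVars t1 x else pathVars t0 x)

def costIn {n : ℕ} (S : Finset (Fin n)) : DecTree n → (Fin n → Bool) → ℕ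
  | .leaf _, _ => 0
  | .node i t0 t1, x =>
      (if i ∈ S then 1 else 0) + (if x i then costIn S t1 x else costIn S t0 x)

lemma eval_agree {n : ℕ} (t : DecTree n) (x x' : Fin n → Bool)
    (h : ∀ i ∈ pathVars t x, x' i = x i) : t.eval x' = t.eval x := by
  induction t with
  | leaf b => rfl
  | node i t0 t1 ih0 ih1 =>
    have hxi : x' i = x i := h i (by simp [pathVars])
    simp only [DecTree.eval, hxi]
    by_cases hi : x i
    · simp only [hi, if_true]
      exact ih1 (fun j hj => h j (by simp [pathVars, hi, hj]))
    · simp only [hi, if_false]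
      exact ih0 (fun j hj => h j (by simp [pathVars, hi, hj]))

lemma determines_pathVars {n : ℕ} {t : DecTree n} {f : (Fin n → Bool) → Bool}
    (ht : t.Computes f) (x : Fin n → Bool) : Determines n f (pathVars t x) x := by
  intro x' hx'
  rw [← ht x', ← ht x]
  exact eval_agree t x x' hx'

lemma costOn_unit_eq {n : ℕ} (t : DecTree n) (x : Fin n → Bool) :
    t.costOn (fun _ => 1) x = (costIn univ t x : ℝ) := by
  induction t with
  | leaf b => simp [DecTree.costOn, costIn]
  | node i t0 t1 ih0 ih1 =>
    simp only [DecTree.costOn, costIn, mem_univ, if_true]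
    by_cases hi : x i <;> simp [hi, ih0, ih1, add_comm]

lemma costIn_mono {n : ℕ} {S S' : Finset (Fin n)} (h : S ⊆ S') (t : DecTree n)
    (x : Fin n → Bool) : costIn S t x ≤ costIn S' t x := by
  induction t with
  | leaf b => simp [costIn]
  | node i t0 t1 ih0 ih1 =>
    simp only [costIn]
    gcongr
    · split <;> split <;> simp_all
      exact absurd (h ‹_›) ‹_›
    · split <;> assumption

lemma card_pathVars_le_costIn {n : ℕ} (t : DecTree n) (x : Fin n → Bool) :
    (pathVars t x).card ≤ costIn univ t x := by
  induction t with
  | leaf b => simp [pathVars, costIn]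
  | node i t0 t1 ih0 ih1 =>
    simp only [pathVars, costIn, mem_univ, if_true]
    by_cases hi : x i <;> simp [hi] <;>
      exact le_trans (card_insert_le _ _) (by omega)

end SBFE

namespace SBFE

section certs
variable {n m : ℕ} {T : Fin m → Finset (Fin n)} {f : (Fin n → Bool) → Bool}

lemma false_char (hf : ∀ x, f x = true ↔ ∃ j, ∀ i ∈ T j, x i = true)
    (x : Fin n → Bool) : f x = false ↔ ∀ j, ∃ i ∈ T j, x i = false := by
  rw [← Bool.not_eq_true, hf]
  push_neg
  simp only [Bool.not_eq_true]

/-- a determining set for a 1-input contains a fully true term -/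
lemma one_cert (hf : ∀ x, f x = true ↔ ∃ j, ∀ i ∈ T j, x i = true)
    {S : Finset (Fin n)} {x : Fin n → Bool} (hd : Determines n f S x)
    (hx : f x = true) : ∃ j, (T j) ⊆ S ∧ ∀ i ∈ T j, x i = true := by
  set x' : Fin n → Bool := fun i => if i ∈ S then x i else false with hx'
  have h1 : f x' = true := by
    rw [hd x' (fun i hi => by simp [hx', hi])]; exact hx
  obtain ⟨j, hj⟩ := (hf x').mp h1
  refine ⟨j, fun i hi => ?_, fun i hi => ?_⟩
  · have := hj i hi
    by_contra hiS
    simp [hx', hiS] at this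
  · have := hj i hi
    by_cases hiS : i ∈ S
    · simpa [hx', hiS] using this
    · simp [hx', hiS] at this

/-- a determining set for a 0-input contains a false variable in every term -/
lemma zero_cert (hf : ∀ x, f x = true ↔ ∃ j, ∀ i ∈ T j, x i = true)
    {S : Finset (Fin n)} {x : Fin n → Bool} (hd : Determines n f S x)
    (hx : f x = false) (j : Fin m) : ∃ i ∈ S ∩ T j, x i = false := by
  set x' : Fin n → Bool := fun i => if i ∈ S then x i else true with hx'
  have h1 : f x' = false := by
    rw [hd x' (fun i hi => by simp [hx', hi])]; exact hx
  obtain ⟨i, hiT, hifalse⟩ := (false_char hf x').mp h1 j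
  by_cases hiS : i ∈ S
  · exact ⟨i, mem_inter.mpr ⟨hiS, hiT⟩, by simpa [hx', hiS] using hifalse⟩
  · simp [hx', hiS] at hifalse

end certs
end SBFE

namespace SBFE
variable {n : ℕ}

noncomputable def Vaux (p : Fin n → ℝ) : ℕ → Finset (Fin n) → ℝ
  | 0, _ => 0
  | (k+1), S =>
    if h : S.Nonempty then
      (S.image (fun i => (1 - ∏ l ∈ S, p l) + p i * Vaux p k (S.erase i))).min'
        (h.image _)
    else 0

lemma Vaux_le (p : Fin n → ℝ) (k : ℕ) {S : Finset (Fin n)} {i : Fin n} (hi : i ∈ S) :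
    Vaux p (k+1) S ≤ (1 - ∏ l ∈ S, p l) + p i * Vaux p k (S.erase i) := by
  rw [Vaux, dif_pos ⟨i, hi⟩]
  exact min'_le _ _ (mem_image_of_mem _ hi)

lemma Vaux_exists (p : Fin n → ℝ) (k : ℕ) {S : Finset (Fin n)} (h : S.Nonempty) :
    ∃ i, i ∈ S ∧ Vaux p (k+1) S
      = (1 - ∏ l ∈ S, p l) + p i * Vaux p k (S.erase i) := by
  rw [Vaux, dif_pos h]
  obtain ⟨i, hi, hval⟩ := mem_image.mp
    (min'_mem (S.image (fun i => (1 - ∏ l ∈ S, p l) + p i * Vaux p k (S.erase i)))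
      (h.image _))
  exact ⟨i, hi, hval.symm⟩

lemma Vaux_nonneg {p : Fin n → ℝ} (hp : ∀ i, 0 < p i ∧ p i < 1) :
    ∀ (k : ℕ) (S : Finset (Fin n)), 0 ≤ Vaux p k S := by
  intro k
  induction k with
  | zero => intro S; simp [Vaux]
  | succ k ih =>
    intro S
    by_cases h : S.Nonempty
    · obtain ⟨i, hi, hval⟩ := Vaux_exists p k h
      rw [hval]
      have h1 : ∏ l ∈ S, p l ≤ 1 :=
        Finset.prod_le_one (fun l _ => (hp l).1.le) (fun l _ => (hp l).2.le)
      have := ih (S.erase i)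
      nlinarith [(hp i).1.le]
    · rw [Vaux, dif_neg h]

noncomputable def pickElem (p : Fin n → ℝ) (k : ℕ) (S : Finset (Fin n))
    (h : S.Nonempty) : Fin n :=
  Classical.choose (Vaux_exists p k h)

lemma pickElem_mem (p : Fin n → ℝ) (k : ℕ) {S : Finset (Fin n)} (h : S.Nonempty) :
    pickElem p k S h ∈ S := (Classical.choose_spec (Vaux_exists p k h)).1

lemma pickElem_spec (p : Fin n → ℝ) (k : ℕ) {S : Finset (Fin n)} (h : S.Nonempty) :
    Vaux p (k+1) S = (1 - ∏ l ∈ S, p l)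
      + p (pickElem p k S h) * Vaux p k (S.erase (pickElem p k S h)) :=
  (Classical.choose_spec (Vaux_exists p k h)).2

noncomputable def sigmaAux (p : Fin n → ℝ) : ℕ → Finset (Fin n) → List (Fin n)
  | 0, _ => []
  | (k+1), S =>
    if h : S.Nonempty then
      pickElem p k S h :: sigmaAux p k (S.erase (pickElem p k S h))
    else []

lemma sigmaAux_mem (p : Fin n → ℝ) :
    ∀ (k : ℕ) (S : Finset (Fin n)), k = S.card →
      ∀ i, i ∈ sigmaAux p k S ↔ i ∈ S := by
  intro k
  induction k with
  | zero =>
    intro S hk i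
    simp [sigmaAux, (card_eq_zero.mp hk.symm) ▸ (by simp : i ∉ (∅ : Finset (Fin n)))]
  | succ k ih =>
    intro S hk i
    have h : S.Nonempty := card_pos.mp (by omega)
    rw [sigmaAux, dif_pos h]
    have hc : k = (S.erase (pickElem p k S h)).card := by
      rw [card_erase_of_mem (pickElem_mem p k h)]; omega
    simp only [List.mem_cons, ih _ hc, mem_erase]
    constructor
    · rintro (rfl | ⟨_, hi⟩)
      · exact pickElem_mem p k h
      · exact hi
    · intro hi
      by_cases hip : i = pickElem p k S h
      · exact Or.inl hip
      · exact Or.inr ⟨hip, hi⟩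

lemma sigmaAux_nodup (p : Fin n → ℝ) :
    ∀ (k : ℕ) (S : Finset (Fin n)), k = S.card → (sigmaAux p k S).Nodup := by
  intro k
  induction k with
  | zero => intro S hk; simp [sigmaAux]
  | succ k ih =>
    intro S hk
    have h : S.Nonempty := card_pos.mp (by omega)
    rw [sigmaAux, dif_pos h]
    have hc : k = (S.erase (pickElem p k S h)).card := by
      rw [card_erase_of_mem (pickElem_mem p k h)]; omega
    refine List.nodup_cons.mpr ⟨?_, ih _ hc⟩
    rw [sigmaAux_mem p k _ hc]
    simp

lemma sigmaAux_length (p : Fin n → ℝ) :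
    ∀ (k : ℕ) (S : Finset (Fin n)), k = S.card → (sigmaAux p k S).length = k := by
  intro k
  induction k with
  | zero => intro S hk; simp [sigmaAux]
  | succ k ih =>
    intro S hk
    have h : S.Nonempty := card_pos.mp (by omega)
    rw [sigmaAux, dif_pos h]
    have hc : k = (S.erase (pickElem p k S h)).card := by
      rw [card_erase_of_mem (pickElem_mem p k h)]; omega
    simp [ih _ hc]

def dList : List (Fin n) → (Fin n → Bool) → ℕ
  | [], _ => 0
  | i :: l, x => if x i then 1 + dList l x else 1

lemma dList_first {x : Fin n → Bool} :
    ∀ (l : List (Fin n)), (∃ i ∈ l, x i = false) →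
      ∃ r i0, dList l x = r + 1 ∧ l[r]? = some i0 ∧ x i0 = false := by
  intro l
  induction l with
  | nil => rintro ⟨i, hi, -⟩; simp at hi
  | cons a l ih =>
    rintro ⟨i, hi, hfalse⟩
    by_cases ha : x a
    · have : ∃ i ∈ l, x i = false := by
        rcases List.mem_cons.mp hi with rfl | h
        · rw [ha] at hfalse; simp at hfalse
        · exact ⟨i, h, hfalse⟩
      obtain ⟨r, i0, h1, h2, h3⟩ := ih this
      exact ⟨r + 1, i0, by simp [dList, ha, h1, add_comm], by simpa using h2, h3⟩
    · exact ⟨0, a, by simp [dList, ha], rfl, by simpa using ha⟩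

end SBFE

namespace SBFE
variable {n : ℕ}

/-- product weight restricted to a set of coordinates -/
def WS (p : Fin n → ℝ) (S : Finset (Fin n)) (x : Fin n → Bool) : ℝ :=
  ∏ i ∈ S, (if x i then p i else 1 - p i)

/-- the inputs agreeing with `y` outside `S` -/
def AF (S : Finset (Fin n)) (y : Fin n → Bool) : Finset (Fin n → Bool) :=
  univ.filter (fun x => ∀ i, i ∉ S → x i = y i)

/-- indicator that some coordinate in `S` is false -/
def F1 (S : Finset (Fin n)) (x : Fin n → Bool) : ℝ :=
  if ∃ i ∈ S, x i = false then 1 else 0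

lemma mem_AF {S : Finset (Fin n)} {y x : Fin n → Bool} :
    x ∈ AF S y ↔ ∀ i, i ∉ S → x i = y i := by simp [AF]

lemma AF_empty (y : Fin n → Bool) : AF (∅ : Finset (Fin n)) y = {y} := by
  ext x
  simp only [mem_AF, notMem_empty, not_false_iff, forall_true_left, mem_singleton]
  exact ⟨fun h => funext h, fun h i => by rw [h]⟩

lemma filter_AF_eq {S : Finset (Fin n)} {y : Fin n → Bool} {a : Fin n} (ha : a ∈ S)
    (b : Bool) :
    (AF S y).filter (fun x => x a = b) = AF (S.erase a) (Function.update y a b) := by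
  ext x
  simp only [mem_filter, mem_AF, mem_erase]
  constructor
  · rintro ⟨hx, hxa⟩
    intro i hi
    push_neg at hi
    by_cases hia : i = a
    · subst hia; rw [hxa, Function.update_self]
    · rw [Function.update_of_ne hia]
      exact hx i (hi hia)
  · intro hx
    have hxa : x a = b := by
      have := hx a (by simp)
      rwa [Function.update_self] at this
    refine ⟨fun i hi => ?_, hxa⟩
    have hia : i ≠ a := fun h => hi (h ▸ ha)
    have := hx i (by simp [hia, hi])
    rwa [Function.update_of_ne hia] at this

lemma AF_split {S : Finset (Fin n)} (y : Fin n → Bool) {a : Fin n} (ha : a ∈ S)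
    (F : (Fin n → Bool) → ℝ) :
    ∑ x ∈ AF S y, F x =
      ∑ x ∈ AF (S.erase a) (Function.update y a false), F x +
      ∑ x ∈ AF (S.erase a) (Function.update y a true), F x := by
  rw [← Finset.sum_filter_add_sum_filter_not (AF S y) (fun x => x a = false)]
  congr 1
  · rw [filter_AF_eq ha false]
  · have h2 : (AF S y).filter (fun x => ¬ x a = false) =
        AF (S.erase a) (Function.update y a true) := by
      rw [← filter_AF_eq ha true]
      exact filter_congr (fun x _ => by simp)
    rw [h2]

lemma AF_value {S : Finset (Fin n)} {y : Fin n → Bool} {a : Fin n} (ha : a ∉ S)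
    {x : Fin n → Bool} (hx : x ∈ AF S y) : x a = y a := mem_AF.mp hx a ha

lemma WS_erase (p : Fin n → ℝ) {S : Finset (Fin n)} {a : Fin n} (ha : a ∈ S)
    (x : Fin n → Bool) :
    WS p S x = (if x a then p a else 1 - p a) * WS p (S.erase a) x :=
  (Finset.mul_prod_erase S _ ha).symm

lemma F1_erase {S : Finset (Fin n)} {a : Fin n} (ha : a ∈ S) {x : Fin n → Bool}
    (hxa : x a = true) : F1 S x = F1 (S.erase a) x := by
  unfold F1
  congr 1
  simp only [eq_iff_iff]
  constructor
  · rintro ⟨i, hi, hif⟩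
    refine ⟨i, mem_erase.mpr ⟨?_, hi⟩, hif⟩
    rintro rfl; rw [hxa] at hif; exact absurd hif (by simp)
  · rintro ⟨i, hi, hif⟩
    exact ⟨i, (mem_erase.mp hi).2, hif⟩

lemma F1_of_false {S : Finset (Fin n)} {a : Fin n} (ha : a ∈ S) {x : Fin n → Bool}
    (hxa : x a = false) : F1 S x = 1 := by
  unfold F1
  rw [if_pos ⟨a, ha, hxa⟩]

lemma mass_one (p : Fin n → ℝ) :
    ∀ (k : ℕ) (S : Finset (Fin n)), S.card = k → ∀ (y : Fin n → Bool),
      ∑ x ∈ AF S y, WS p S x = 1 := by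
  intro k
  induction k with
  | zero =>
    intro S hk y
    rw [card_eq_zero.mp hk, AF_empty]
    simp [WS]
  | succ k ih =>
    intro S hk y
    obtain ⟨a, ha⟩ := card_pos.mp (by omega : 0 < S.card)
    have hc : (S.erase a).card = k := by rw [card_erase_of_mem ha]; omega
    rw [AF_split y ha]
    have hb : ∀ (b : Bool), ∑ x ∈ AF (S.erase a) (Function.update y a b), WS p S x
        = (if b then p a else 1 - p a) := by
      intro b
      calc ∑ x ∈ AF (S.erase a) (Function.update y a b), WS p S x
          = ∑ x ∈ AF (S.erase a) (Function.update y a b),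
              (if b then p a else 1 - p a) * WS p (S.erase a) x := by
            refine Finset.sum_congr rfl (fun x hx => ?_)
            rw [WS_erase p ha x, AF_value (by simp) hx, Function.update_self]
        _ = (if b then p a else 1 - p a) := by
            rw [← Finset.mul_sum, ih _ hc, mul_one]
    rw [hb false, hb true]
    ring_nf
    simp

lemma mass_false (p : Fin n → ℝ) :
    ∀ (k : ℕ) (S : Finset (Fin n)), S.card = k → ∀ (y : Fin n → Bool),
      ∑ x ∈ AF S y, WS p S x * F1 S x = 1 - ∏ i ∈ S, p i := by
  intro k
  induction k with
  | zero =>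
    intro S hk y
    rw [card_eq_zero.mp hk, AF_empty]
    simp [WS, F1]
  | succ k ih =>
    intro S hk y
    obtain ⟨a, ha⟩ := card_pos.mp (by omega : 0 < S.card)
    have hc : (S.erase a).card = k := by rw [card_erase_of_mem ha]; omega
    rw [AF_split y ha]
    have hfalse : ∑ x ∈ AF (S.erase a) (Function.update y a false),
        WS p S x * F1 S x = 1 - p a := by
      calc ∑ x ∈ AF (S.erase a) (Function.update y a false), WS p S x * F1 S x
          = ∑ x ∈ AF (S.erase a) (Function.update y a false),
              (1 - p a) * WS p (S.erase a) x := by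
            refine Finset.sum_congr rfl (fun x hx => ?_)
            have hxa : x a = false := by
              rw [AF_value (by simp) hx, Function.update_self]
            rw [WS_erase p ha x, hxa, F1_of_false ha hxa]
            simp
        _ = 1 - p a := by rw [← Finset.mul_sum, mass_one p k _ hc, mul_one]
    have htrue : ∑ x ∈ AF (S.erase a) (Function.update y a true),
        WS p S x * F1 S x = p a * (1 - ∏ i ∈ S.erase a, p i) := by
      calc ∑ x ∈ AF (S.erase a) (Function.update y a true), WS p S x * F1 S x
          = ∑ x ∈ AF (S.erase a) (Function.update y a true),
              p a * (WS p (S.erase a) x * F1 (S.erase a) x) := by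
            refine Finset.sum_congr rfl (fun x hx => ?_)
            have hxa : x a = true := by
              rw [AF_value (by simp) hx, Function.update_self]
            rw [WS_erase p ha x, hxa, F1_erase ha hxa]
            simp [mul_assoc]
        _ = p a * (1 - ∏ i ∈ S.erase a, p i) := by
            rw [← Finset.mul_sum, ih _ hc]
    rw [hfalse, htrue, ← Finset.mul_prod_erase S p ha]
    ring

end SBFE

namespace SBFE
variable {n : ℕ}

lemma WS_nonneg {p : Fin n → ℝ} (hp : ∀ i, 0 < p i ∧ p i < 1) (S : Finset (Fin n))
    (x : Fin n → Bool) : 0 ≤ WS p S x :=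
  Finset.prod_nonneg (fun i _ => by
    by_cases h : x i <;> simp [h] <;> nlinarith [(hp i).1, (hp i).2])

lemma F1_nonneg (S : Finset (Fin n)) (x : Fin n → Bool) : 0 ≤ F1 S x := by
  unfold F1; split <;> norm_num

lemma mass_d (p : Fin n → ℝ) :
    ∀ (k : ℕ) (S : Finset (Fin n)), S.card = k → ∀ (y : Fin n → Bool),
      ∑ x ∈ AF S y, WS p S x * F1 S x * (dList (sigmaAux p k S) x : ℝ)
        = Vaux p k S := by
  intro k
  induction k with
  | zero =>
    intro S hk y
    rw [card_eq_zero.mp hk, AF_empty]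
    simp [WS, F1, Vaux]
  | succ k ih =>
    intro S hk y
    have h : S.Nonempty := card_pos.mp (by omega)
    set a := pickElem p k S h with ha_def
    have ha : a ∈ S := pickElem_mem p k h
    have hc : (S.erase a).card = k := by rw [card_erase_of_mem ha]; omega
    rw [sigmaAux, dif_pos h, AF_split y ha]
    have hfalse : ∑ x ∈ AF (S.erase a) (Function.update y a false),
        WS p S x * F1 S x * (dList (a :: sigmaAux p k (S.erase a)) x : ℝ)
        = 1 - p a := by
      calc _ = ∑ x ∈ AF (S.erase a) (Function.update y a false),
              (1 - p a) * WS p (S.erase a) x := by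
            refine Finset.sum_congr rfl (fun x hx => ?_)
            have hxa : x a = false := by
              rw [AF_value (by simp) hx, Function.update_self]
            rw [WS_erase p ha x, hxa, F1_of_false ha hxa]
            simp [dList, hxa]
        _ = 1 - p a := by rw [← Finset.mul_sum, mass_one p k _ hc, mul_one]
    have htrue : ∑ x ∈ AF (S.erase a) (Function.update y a true),
        WS p S x * F1 S x * (dList (a :: sigmaAux p k (S.erase a)) x : ℝ)
        = p a * ((1 - ∏ i ∈ S.erase a, p i) + Vaux p k (S.erase a)) := by
      calc _ = ∑ x ∈ AF (S.erase a) (Function.update y a true),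
              p a * (WS p (S.erase a) x * F1 (S.erase a) x
                + WS p (S.erase a) x * F1 (S.erase a) x
                  * (dList (sigmaAux p k (S.erase a)) x : ℝ)) := by
            refine Finset.sum_congr rfl (fun x hx => ?_)
            have hxa : x a = true := by
              rw [AF_value (by simp) hx, Function.update_self]
            rw [WS_erase p ha x, hxa, F1_erase ha hxa]
            simp only [dList, hxa, if_true]
            push_cast
            ring
        _ = p a * ((1 - ∏ i ∈ S.erase a, p i) + Vaux p k (S.erase a)) := by
            rw [← Finset.mul_sum, Finset.sum_add_distrib,
              mass_false p k _ hc, ih _ hc]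
    rw [hfalse, htrue, pickElem_spec p k h, ← ha_def,
      ← Finset.mul_prod_erase S p ha]
    ring

lemma lemA {p : Fin n → ℝ} (hp : ∀ i, 0 < p i ∧ p i < 1) (t : DecTree n) :
    ∀ (k : ℕ) (S : Finset (Fin n)), S.card = k → ∀ (y : Fin n → Bool),
      (∀ x : Fin n → Bool, (∀ i, i ∉ S → x i = y i) → (∃ i ∈ S, x i = false) →
        ∃ i ∈ pathVars t x ∩ S, x i = false) →
      Vaux p k S ≤ ∑ x ∈ AF S y, WS p S x * F1 S x * (costIn S t x : ℝ) := by
  induction t with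
  | leaf b =>
    intro k S hk y H
    by_cases h : S.Nonempty
    · exfalso
      obtain ⟨i0, hi0⟩ := h
      obtain ⟨l, hl, -⟩ := H (fun i => if i ∈ S then false else y i)
        (fun i hi => by simp [hi]) ⟨i0, hi0, by simp [hi0]⟩
      simp [pathVars] at hl
    · rw [not_nonempty_iff_eq_empty] at h
      subst h
      simp only [card_empty] at hk
      subst hk
      simp [Vaux, costIn]
  | node i t0 t1 ih0 ih1 =>
    intro k S hk y H
    by_cases hiS : i ∈ S
    · -- i ∈ S
      have h : S.Nonempty := ⟨i, hiS⟩
      obtain ⟨k', rfl⟩ : ∃ k', k = k' + 1 := ⟨k - 1, by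
        have := card_pos.mpr h; omega⟩
      have hc : (S.erase i).card = k' := by rw [card_erase_of_mem hiS]; omega
      rw [AF_split y hiS]
      have hfalse : (1 - p i) ≤ ∑ x ∈ AF (S.erase i) (Function.update y i false),
          WS p S x * F1 S x * (costIn S (DecTree.node i t0 t1) x : ℝ) := by
        calc (1 - p i) = ∑ x ∈ AF (S.erase i) (Function.update y i false),
              (1 - p i) * WS p (S.erase i) x := by
              rw [← Finset.mul_sum, mass_one p k' _ hc, mul_one]
          _ ≤ _ := by
              refine Finset.sum_le_sum (fun x hx => ?_)
              have hxa : x i = false := by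
                rw [AF_value (by simp) hx, Function.update_self]
              rw [WS_erase p hiS x, hxa, F1_of_false hiS hxa]
              simp only [costIn, hiS, if_true, hxa, Bool.false_eq_true, if_false]
              have h0 : (0:ℝ) ≤ WS p (S.erase i) x := WS_nonneg hp _ _
              have h1 : (0:ℝ) ≤ (costIn S t0 x : ℝ) := by positivity
              push_cast
              have h2 : (0:ℝ) ≤ 1 - p i := by linarith [(hp i).2]
              nlinarith [mul_nonneg (mul_nonneg h2 h0) h1]
      have htrue : p i * ((1 - ∏ l ∈ S.erase i, p l) + Vaux p k' (S.erase i))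
          ≤ ∑ x ∈ AF (S.erase i) (Function.update y i true),
          WS p S x * F1 S x * (costIn S (DecTree.node i t0 t1) x : ℝ) := by
        have hIH : Vaux p k' (S.erase i) ≤ ∑ x ∈ AF (S.erase i) (Function.update y i true),
            WS p (S.erase i) x * F1 (S.erase i) x * (costIn (S.erase i) t1 x : ℝ) := by
          refine ih1 k' (S.erase i) hc (Function.update y i true) ?_
          intro x hagree hex
          have hxi : x i = true := by
            rw [hagree i (by simp), Function.update_self]
          have hagree' : ∀ j, j ∉ S → x j = y j := by
            intro j hj
            have hji : j ≠ i := fun hji => hj (hji ▸ hiS)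
            rw [hagree j (by simp [hji, hj]), Function.update_of_ne hji]
          obtain ⟨j, hjS, hjf⟩ := hex
          obtain ⟨l, hl, hlf⟩ := H x hagree' ⟨j, mem_of_mem_erase hjS, hjf⟩
          rw [mem_inter] at hl
          have hlP : l ∈ pathVars t1 x := by
            have := hl.1
            simp only [pathVars, hxi, if_true, mem_insert] at this
            rcases this with rfl | h2
            · rw [hxi] at hlf; exact absurd hlf (by simp)
            · exact h2
          have hli : l ≠ i := by
            rintro rfl; rw [hxi] at hlf; exact absurd hlf (by simp)
          exact ⟨l, mem_inter.mpr ⟨hlP, mem_erase.mpr ⟨hli, hl.2⟩⟩, hlf⟩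
        calc p i * ((1 - ∏ l ∈ S.erase i, p l) + Vaux p k' (S.erase i))
            ≤ p i * ((1 - ∏ l ∈ S.erase i, p l)
              + ∑ x ∈ AF (S.erase i) (Function.update y i true),
                WS p (S.erase i) x * F1 (S.erase i) x * (costIn (S.erase i) t1 x : ℝ)) := by
              have := (hp i).1
              nlinarith [hIH]
          _ = p i * (∑ x ∈ AF (S.erase i) (Function.update y i true),
                WS p (S.erase i) x * F1 (S.erase i) x)
              + p i * (∑ x ∈ AF (S.erase i) (Function.update y i true),
                WS p (S.erase i) x * F1 (S.erase i) x * (costIn (S.erase i) t1 x : ℝ)) := by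
              rw [mass_false p k' _ hc (Function.update y i true)]
              ring
          _ = ∑ x ∈ AF (S.erase i) (Function.update y i true),
                p i * (WS p (S.erase i) x * F1 (S.erase i) x
                  + WS p (S.erase i) x * F1 (S.erase i) x * (costIn (S.erase i) t1 x : ℝ)) := by
              rw [Finset.mul_sum, Finset.mul_sum, ← Finset.sum_add_distrib]
              exact Finset.sum_congr rfl (fun x hx => by ring)
          _ ≤ _ := by
              refine Finset.sum_le_sum (fun x hx => ?_)
              have hxa : x i = true := by
                rw [AF_value (by simp) hx, Function.update_self]
              rw [WS_erase p hiS x, hxa, F1_erase hiS hxa]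
              simp only [costIn, hiS, if_true, hxa]
              have h0 : (0:ℝ) ≤ WS p (S.erase i) x := WS_nonneg hp _ _
              have h1 : (0:ℝ) ≤ F1 (S.erase i) x := F1_nonneg _ _
              have h2 : (costIn (S.erase i) t1 x : ℝ) ≤ (costIn S t1 x : ℝ) := by
                exact_mod_cast costIn_mono (erase_subset _ _) t1 x
              have h3 : (0:ℝ) ≤ p i := (hp i).1.le
              have h4 : (0:ℝ) ≤ p i * WS p (S.erase i) x * F1 (S.erase i) x :=
                mul_nonneg (mul_nonneg h3 h0) h1
              push_cast
              nlinarith [mul_le_mul_of_nonneg_left h2 h4]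
      calc Vaux p (k'+1) S
          ≤ (1 - ∏ l ∈ S, p l) + p i * Vaux p k' (S.erase i) := Vaux_le p k' hiS
        _ ≤ (1 - p i) + p i * ((1 - ∏ l ∈ S.erase i, p l) + Vaux p k' (S.erase i)) := by
            rw [← Finset.mul_prod_erase S p hiS]
            ring_nf
            nlinarith [(hp i).1.le]
        _ ≤ _ := add_le_add hfalse htrue
    · -- i ∉ S
      have key : ∀ x ∈ AF S y,
          WS p S x * F1 S x * (costIn S (DecTree.node i t0 t1) x : ℝ)
          = WS p S x * F1 S x * (costIn S (if y i then t1 else t0) x : ℝ) := by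
        intro x hx
        have hxi : x i = y i := AF_value hiS hx
        simp only [costIn, hiS, if_false, hxi]
        by_cases hyi : y i <;> simp [hyi]
      rw [Finset.sum_congr rfl key]
      clear key
      have Htrans : ∀ x : Fin n → Bool, (∀ j, j ∉ S → x j = y j) →
          (∃ j ∈ S, x j = false) →
          ∃ l ∈ pathVars (if y i then t1 else t0) x ∩ S, x l = false := by
        intro x hagree hex
        obtain ⟨l, hl, hlf⟩ := H x hagree hex
        rw [mem_inter] at hl
        have hli : l ≠ i := fun h => hiS (h ▸ hl.2)
        have hxi : x i = y i := hagree i hiS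
        have hlP : l ∈ pathVars (if y i then t1 else t0) x := by
          have := hl.1
          simp only [pathVars, mem_insert] at this
          rcases this with rfl | h2
          · exact absurd rfl hli
          · by_cases hyi : y i
            · simp only [hyi, if_true]
              simpa [hxi, hyi] using h2
            · simp only [hyi, if_false]
              have : x i = false := by rw [hxi]; simp [hyi]
              simpa [this] using h2
        exact ⟨l, mem_inter.mpr ⟨hlP, hl.2⟩, hlf⟩
      by_cases hyi : y i
      · simp only [hyi, if_true] at Htrans ⊢
        exact ih1 _ S hk y Htrans
      · simp only [hyi, if_false] at Htrans ⊢
        exact ih0 _ S hk y Htrans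

end SBFE

namespace SBFE
variable {n : ℕ}

def YS (S : Finset (Fin n)) : Finset (Fin n → Bool) :=
  univ.filter (fun y => ∀ i ∈ S, y i = false)

lemma fiber_sum (S : Finset (Fin n)) (F : (Fin n → Bool) → ℝ) :
    ∑ x : Fin n → Bool, F x = ∑ y ∈ YS S, ∑ x ∈ AF S y, F x := by
  have h := Finset.sum_fiberwise_of_maps_to
    (g := fun (x : Fin n → Bool) (i : Fin n) => if i ∈ S then false else x i)
    (t := YS S) (f := F) (s := univ)
    (fun x _ => by simp only [YS, mem_filter, mem_univ, true_and]
                   intro i hi; simp [hi])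
  rw [← h]
  refine Finset.sum_congr rfl (fun y hy => ?_)
  refine Finset.sum_congr ?_ (fun _ _ => rfl)
  ext x
  simp only [mem_filter, mem_univ, true_and, mem_AF]
  simp only [YS, mem_filter, mem_univ, true_and] at hy
  constructor
  · rintro rfl
    intro i hi
    simp [hi]
  · intro hagree
    funext i
    by_cases hi : i ∈ S
    · simp [hi, hy i hi]
    · simp [hi, hagree i hi]

end SBFE

namespace SBFE
variable {n m : ℕ} {T : Fin m → Finset (Fin n)} {f : (Fin n → Bool) → Bool}
  {p : Fin n → ℝ}

/-- indicator that all terms other than `j` contain a false variable -/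
def othersInd (T : Fin m → Finset (Fin n)) (j : Fin m) (y : Fin n → Bool) : ℝ :=
  if ∀ k, k ≠ j → ∃ i ∈ T k, y i = false then 1 else 0

def Ind0 (f : (Fin n → Bool) → Bool) (x : Fin n → Bool) : ℝ :=
  if f x = false then 1 else 0

def Ind1 (f : (Fin n → Bool) → Bool) (x : Fin n → Bool) : ℝ :=
  if f x = true then 1 else 0

lemma prodWeight_split (p : Fin n → ℝ) (S : Finset (Fin n)) (x : Fin n → Bool) :
    prodWeight n p x = WS p S x * (∏ i ∈ Sᶜ, if x i then p i else 1 - p i) := by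
  rw [prodWeight, WS, Finset.prod_mul_prod_compl]

lemma decomp (hdisj : ∀ j k, j ≠ k → Disjoint (T j) (T k))
    (hchar : ∀ x, f x = true ↔ ∃ j, ∀ i ∈ T j, x i = true)
    (j : Fin m) (g : (Fin n → Bool) → ℝ) :
    ∑ x : Fin n → Bool, prodWeight n p x * Ind0 f x * g x
      = ∑ y ∈ YS (T j),
          ((∏ i ∈ (T j)ᶜ, if y i then p i else 1 - p i) * othersInd T j y)
          * (∑ x ∈ AF (T j) y, WS p (T j) x * F1 (T j) x * g x) := by
  rw [fiber_sum (T j)]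
  refine Finset.sum_congr rfl (fun y hy => ?_)
  rw [Finset.mul_sum]
  refine Finset.sum_congr rfl (fun x hx => ?_)
  have hagree : ∀ i, i ∉ T j → x i = y i := mem_AF.mp hx
  have hWc : (∏ i ∈ (T j)ᶜ, if x i then p i else 1 - p i)
      = ∏ i ∈ (T j)ᶜ, if y i then p i else 1 - p i := by
    refine Finset.prod_congr rfl (fun i hi => ?_)
    rw [hagree i (mem_compl.mp hi)]
  have hoth : othersInd T j x = othersInd T j y := by
    unfold othersInd
    congr 1
    simp only [eq_iff_iff]
    constructor <;> intro h k hk <;> obtain ⟨i, hiT, hif⟩ := h k hk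
    · exact ⟨i, hiT, by rw [← hagree i (fun hiS =>
        (Finset.disjoint_left.mp (hdisj k j hk) hiT) hiS)]; exact hif⟩
    · exact ⟨i, hiT, by rw [hagree i (fun hiS =>
        (Finset.disjoint_left.mp (hdisj k j hk) hiT) hiS)]; exact hif⟩
  have hInd : Ind0 f x = F1 (T j) x * othersInd T j x := by
    unfold Ind0 F1 othersInd
    by_cases h1 : ∃ i ∈ T j, x i = false
    · by_cases h2 : ∀ k, k ≠ j → ∃ i ∈ T k, x i = false
      · have : f x = false := by
          rw [false_char hchar]
          intro k
          by_cases hkj : k = j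
          · exact hkj ▸ h1
          · exact h2 k hkj
        rw [if_pos this, if_pos h1, if_pos h2]; norm_num
      · have : ¬ f x = false := by
          intro hfx
          exact h2 (fun k _ => (false_char hchar x).mp hfx k)
        rw [if_neg this, if_pos h1, if_neg h2]; norm_num
    · have : ¬ f x = false := by
        intro hfx
        exact h1 ((false_char hchar x).mp hfx j)
      rw [if_neg this, if_neg h1, zero_mul]
  rw [prodWeight_split p (T j), hInd, hWc, hoth]
  ring

lemma bridge (hp : ∀ i, 0 < p i ∧ p i < 1)
    (hdisj : ∀ j k, j ≠ k → Disjoint (T j) (T k))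
    (hchar : ∀ x, f x = true ↔ ∃ j, ∀ i ∈ T j, x i = true)
    {t : DecTree n} (ht : t.Computes f) (j : Fin m) :
    ∑ x : Fin n → Bool, prodWeight n p x * Ind0 f x
        * (dList (sigmaAux p (T j).card (T j)) x : ℝ)
      ≤ ∑ x : Fin n → Bool, prodWeight n p x * Ind0 f x * (costIn (T j) t x : ℝ) := by
  rw [decomp hdisj hchar j, decomp hdisj hchar j]
  refine Finset.sum_le_sum (fun y hy => ?_)
  have hWc : (0:ℝ) ≤ ∏ i ∈ (T j)ᶜ, if y i then p i else 1 - p i :=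
    Finset.prod_nonneg (fun i _ => by
      by_cases h : y i <;> simp [h] <;> nlinarith [(hp i).1, (hp i).2])
  by_cases hoth : ∀ k, k ≠ j → ∃ i ∈ T k, y i = false
  · have h1 : othersInd T j y = 1 := by unfold othersInd; rw [if_pos hoth]
    rw [h1]
    have hd : ∑ x ∈ AF (T j) y, WS p (T j) x * F1 (T j) x
        * (dList (sigmaAux p (T j).card (T j)) x : ℝ) = Vaux p (T j).card (T j) :=
      mass_d p (T j).card (T j) rfl y
    have hc : Vaux p (T j).card (T j) ≤
        ∑ x ∈ AF (T j) y, WS p (T j) x * F1 (T j) x * (costIn (T j) t x : ℝ) := by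
      refine lemA hp t (T j).card (T j) rfl y ?_
      intro x hagree hex
      have hfx : f x = false := by
        rw [false_char hchar]
        intro k
        by_cases hkj : k = j
        · exact hkj ▸ hex
        · obtain ⟨i, hiT, hif⟩ := hoth k hkj
          refine ⟨i, hiT, ?_⟩
          rw [hagree i (fun hiS =>
            (Finset.disjoint_left.mp (hdisj k j hkj) hiT) hiS)]
          exact hif
      obtain ⟨i, hi, hif⟩ := zero_cert hchar (determines_pathVars ht x) hfx j
      exact ⟨i, hi, hif⟩
    rw [hd]
    have := mul_le_mul_of_nonneg_left hc hWc
    calc (∏ i ∈ (T j)ᶜ, if y i then p i else 1 - p i) * 1 * Vaux p (T j).card (T j)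
        = (∏ i ∈ (T j)ᶜ, if y i then p i else 1 - p i) * Vaux p (T j).card (T j) := by ring
      _ ≤ (∏ i ∈ (T j)ᶜ, if y i then p i else 1 - p i)
          * ∑ x ∈ AF (T j) y, WS p (T j) x * F1 (T j) x * (costIn (T j) t x : ℝ) := this
      _ = _ := by ring
  · have h0 : othersInd T j y = 0 := by unfold othersInd; rw [if_neg hoth]
    rw [h0]
    simp

end SBFE

namespace SBFE

end SBFE

namespace SBFE

lemma exists_perm {n m s : ℕ} (p : Fin n → ℝ) (hm : 0 < m) (hs : n = m * s)
    (T : Fin m → Finset (Fin n)) (hcard : ∀ j, (T j).card = s)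
    (hdisj : ∀ j k, j ≠ k → Disjoint (T j) (T k)) (i0 : Fin n) :
    ∃ π : Equiv.Perm (Fin n),
      ∀ (j : Fin m) (r : ℕ), r < s → ∀ (K : ℕ), m * r + j.val < K →
        ((sigmaAux p (T j).card (T j)).getD r i0) ∈ prefixSet n π K := by
  have hlen : ∀ j : Fin m, (sigmaAux p (T j).card (T j)).length = s := by
    intro j
    rw [sigmaAux_length p (T j).card (T j) rfl, hcard]
  have hmem : ∀ j i, i ∈ sigmaAux p (T j).card (T j) ↔ i ∈ T j := fun j i =>
    sigmaAux_mem p (T j).card (T j) rfl i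
  have hnodup : ∀ j, (sigmaAux p (T j).card (T j)).Nodup := fun j =>
    sigmaAux_nodup p (T j).card (T j) rfl
  set σ : Fin m → List (Fin n) := fun j => sigmaAux p (T j).card (T j) with hσ
  have hdivlt : ∀ k : Fin n, (k : ℕ) / m < s := by
    intro k
    have hk2 : (k : ℕ) < s * m := by
      calc (k : ℕ) < n := k.isLt
        _ = m * s := hs
        _ = s * m := Nat.mul_comm m s
    exact (Nat.div_lt_iff_lt_mul hm).mpr hk2
  set g : Fin n → Fin n := fun k =>
    (σ ⟨(k : ℕ) % m, Nat.mod_lt _ hm⟩).getD ((k : ℕ) / m) i0 with hg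
  have hgval : ∀ (k : Fin n), g k = (σ ⟨(k : ℕ) % m, Nat.mod_lt _ hm⟩).get
      ⟨(k : ℕ) / m, by rw [hlen]; exact hdivlt k⟩ := by
    intro k
    rw [hg]
    exact List.getD_eq_getElem _ _ (by rw [hlen]; exact hdivlt k)
  have hgmem : ∀ (k : Fin n), g k ∈ T ⟨(k : ℕ) % m, Nat.mod_lt _ hm⟩ := by
    intro k
    rw [← hmem, hgval]
    exact List.get_mem _ _
  have hinj : Function.Injective g := by
    intro k k' hkk
    have hj : (⟨(k : ℕ) % m, Nat.mod_lt _ hm⟩ : Fin m)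
        = ⟨(k' : ℕ) % m, Nat.mod_lt _ hm⟩ := by
      by_contra hne
      have h1 := hgmem k
      have h2 := hgmem k'
      rw [hkk] at h1
      exact (Finset.disjoint_left.mp (hdisj _ _ hne) h1) h2
    have hmod : (k : ℕ) % m = (k' : ℕ) % m := congrArg Fin.val hj
    rw [hg] at hkk
    simp only at hkk
    rw [← hj] at hkk
    rw [List.getD_eq_getElem _ _ (by rw [hlen]; exact hdivlt k),
      List.getD_eq_getElem _ _ (by rw [hlen]; exact hdivlt k')] at hkk
    have hdiv : (k : ℕ) / m = (k' : ℕ) / m :=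
      (List.Nodup.getElem_inj_iff (hnodup _)).mp hkk
    have h3 : (k : ℕ) = (k' : ℕ) := by
      have h1 := Nat.div_add_mod (k : ℕ) m
      have h2 := Nat.div_add_mod (k' : ℕ) m
      rw [← h1, ← h2, hmod, hdiv]
    exact Fin.ext h3
  refine ⟨(Equiv.ofBijective g (Finite.injective_iff_bijective.mp hinj)), ?_⟩
  intro j r hr K hK
  have hkn : m * r + (j : ℕ) < n := by
    have hj := j.isLt
    have h1 : m * r + (j : ℕ) < m * (r + 1) := by
      rw [Nat.mul_add]; omega
    have h2 : m * (r + 1) ≤ m * s := Nat.mul_le_mul_left m (by omega)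
    omega
  set k : Fin n := ⟨m * r + (j : ℕ), hkn⟩ with hk
  have hgk : g k = (σ j).getD r i0 := by
    have hmod : (k : ℕ) % m = (j : ℕ) := by
      simp only [hk]
      rw [Nat.mul_add_mod]
      exact Nat.mod_eq_of_lt j.isLt
    have hdiv : (k : ℕ) / m = r := by
      simp only [hk]
      rw [Nat.mul_add_div hm]
      have : (j : ℕ) / m = 0 := Nat.div_eq_of_lt j.isLt
      omega
    show (σ ⟨(k : ℕ) % m, Nat.mod_lt _ hm⟩).getD ((k : ℕ) / m) i0 = (σ j).getD r i0
    have hj2 : (⟨(k : ℕ) % m, Nat.mod_lt _ hm⟩ : Fin m) = j := Fin.ext hmod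
    rw [hj2, hdiv]
  rw [← hgk]
  simp only [prefixSet, mem_filter, mem_univ, true_and]
  have : (Equiv.ofBijective g (Finite.injective_iff_bijective.mp hinj)).symm (g k)
      = k := by
    rw [Equiv.symm_apply_eq]
    rfl
  rw [this]
  exact hK

end SBFE

namespace SBFE
variable {n m : ℕ}

lemma costIn_partition {T : Fin m → Finset (Fin n)}
    (hdisj : ∀ j k, j ≠ k → Disjoint (T j) (T k))
    (hcover : ∀ i : Fin n, ∃ j, i ∈ T j) (t : DecTree n) (x : Fin n → Bool) :
    ∑ j : Fin m, costIn (T j) t x = costIn univ t x := by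
  induction t with
  | leaf b => simp [costIn]
  | node i t0 t1 ih0 ih1 =>
    simp only [costIn, mem_univ, if_true]
    rw [Finset.sum_add_distrib]
    congr 1
    · obtain ⟨j0, hj0⟩ := hcover i
      have : (univ.filter (fun j => i ∈ T j)) = {j0} := by
        ext j
        simp only [mem_filter, mem_univ, true_and, mem_singleton]
        constructor
        · intro hj
          by_contra hne
          exact (Finset.disjoint_left.mp (hdisj j j0 hne) hj) hj0
        · rintro rfl; exact hj0
      simp [Finset.sum_boole, this]
    · by_cases hxi : x i <;> simp [hxi, ih0, ih1]

end SBFE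

namespace SBFE
variable {n m : ℕ}

/-- on a 1-input, any tree computing `f` pays at least the size of a term -/
lemma one_input_cost {T : Fin m → Finset (Fin n)} {f : (Fin n → Bool) → Bool}
    (hchar : ∀ x, f x = true ↔ ∃ j, ∀ i ∈ T j, x i = true)
    {t : DecTree n} (ht : t.Computes f) {x : Fin n → Bool} (hx : f x = true)
    {s : ℕ} (hcard : ∀ j, (T j).card = s) :
    (s : ℝ) ≤ (costIn univ t x : ℝ) := by
  obtain ⟨j, hsub, -⟩ := one_cert hchar (determines_pathVars ht x) hx
  have h1 : s ≤ (pathVars t x).card := by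
    rw [← hcard j]
    exact Finset.card_le_card hsub
  exact_mod_cast le_trans h1 (card_pathVars_le_costIn t x)

def allTree (f : (Fin n → Bool) → Bool) : List (Fin n) → (Fin n → Bool) → DecTree n
  | [], y => .leaf (f y)
  | i :: l, y => .node i (allTree f l (Function.update y i false))
      (allTree f l (Function.update y i true))

lemma allTree_eval (f : (Fin n → Bool) → Bool) :
    ∀ (l : List (Fin n)) (y x : Fin n → Bool),
      (allTree f l y).eval x = f (fun i => if i ∈ l then x i else y i) := by
  intro l
  induction l with
  | nil => intro y x; simp [allTree, DecTree.eval]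
  | cons a l ih =>
    intro y x
    simp only [allTree, DecTree.eval]
    by_cases hxa : x a
    · rw [if_pos hxa, ih]
      congr 1
      funext i
      by_cases hil : i ∈ l
      · simp [hil]
      · by_cases hia : i = a
        · subst hia
          simp [hil, hxa, Function.update_self]
        · simp [hil, hia, Function.update_of_ne hia]
    · rw [if_neg hxa, ih]
      congr 1
      funext i
      by_cases hil : i ∈ l
      · simp [hil]
      · by_cases hia : i = a
        · subst hia
          simp only [hil, List.mem_cons, true_or, if_true, if_false,
            Function.update_self]
          simp only [Bool.not_eq_true] at hxa
          rw [hxa]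
        · simp [hil, hia, Function.update_of_ne hia]

lemma exists_tree (f : (Fin n → Bool) → Bool) : ∃ t : DecTree n, t.Computes f := by
  refine ⟨allTree f (List.finRange n) (fun _ => false), fun x => ?_⟩
  rw [allTree_eval]
  congr 1
  funext i
  simp [List.mem_finRange]

end SBFE

namespace SBFE
variable {n : ℕ}

lemma card_prefixSet_le (π : Equiv.Perm (Fin n)) (K : ℕ) :
    (prefixSet n π K).card ≤ K := by
  have := Finset.card_le_card_of_injOn (f := fun i => (π.symm i).val)
    (s := prefixSet n π K) (t := Finset.range K)
    (fun i hi => by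
      have hi' : i ∈ prefixSet n π K := hi
      simp only [prefixSet, mem_filter, mem_univ, true_and] at hi'
      simp [hi'])
    (fun a _ b _ hab => by
      have : π.symm a = π.symm b := Fin.ext hab
      exact π.symm.injective this)
  simpa using this

lemma card_prefixSet_le_n (π : Equiv.Perm (Fin n)) (K : ℕ) :
    (prefixSet n π K).card ≤ n := by
  calc (prefixSet n π K).card ≤ (univ : Finset (Fin n)).card := card_filter_le _ _
    _ = n := by simp

lemma naCost_eq_card (f : (Fin n → Bool) → Bool) (π : Equiv.Perm (Fin n))
    (x : Fin n → Bool) :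
    naCost n f (fun _ => 1) π x = ((prefixSet n π (naSteps n f π x)).card : ℝ) := by
  rw [naCost]
  simp

lemma getD_of_get? {l : List (Fin n)} {r : ℕ} {a d : Fin n}
    (h : l[r]? = some a) : l.getD r d = a := by
  have hr : r < l.length := by obtain ⟨h1, -⟩ := List.getElem?_eq_some_iff.mp h; exact h1
  rw [List.getD_eq_getElem _ _ hr]
  have := List.getElem?_eq_getElem hr
  rw [this] at h
  simpa using h

end SBFE


open SBFE

/-- For a monotone read-once DNF `f` with `m` terms, each containing exactly `n/m`
variables (so every variable appears in exactly one term), under unit costs and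
arbitrary probabilities there is a non-adaptive strategy of expected cost at most
`m·OPT_A(f)`. -/
theorem stmt3 (n m : ℕ) (hm : 0 < m) (hdvd : m ∣ n)
    (T : Fin m → Finset (Fin n)) (f : (Fin n → Bool) → Bool)
    (hcard : ∀ j, (T j).card = n / m)
    (hcover : ∀ i : Fin n, ∃ j, i ∈ T j)
    (hf : IsReadOnceDNF n m T f)
    (p : Fin n → ℝ) (hp : ∀ i, 0 < p i ∧ p i < 1) :
    ∃ π : Equiv.Perm (Fin n),
      naExpCost n f (fun _ => 1) p π ≤ (m : ℝ) * OPTA n f (fun _ => 1) p := by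
  unfold IsReadOnceDNF at hf
  obtain ⟨hne, hdisj, hchar⟩ := hf
  set s : ℕ := n / m with hs_def
  have hns : n = m * s := (Nat.mul_div_cancel' hdvd).symm
  obtain ⟨i0, -⟩ := hne ⟨0, hm⟩
  obtain ⟨π, hπ⟩ := exists_perm p hm hns T hcard hdisj i0
  refine ⟨π, ?_⟩
  set pw : (Fin n → Bool) → ℝ := prodWeight n p with hpw
  have hpw_nonneg : ∀ x, 0 ≤ pw x := by
    intro x
    refine Finset.prod_nonneg (fun i _ => ?_)
    by_cases h : x i <;> simp [h] <;> nlinarith [(hp i).1, (hp i).2]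
  set d : Fin m → (Fin n → Bool) → ℕ :=
    fun j x => dList (sigmaAux p (T j).card (T j)) x with hd_def
  -- pointwise upper bound on the non-adaptive cost
  have hup : ∀ x : Fin n → Bool,
      pw x * naCost n f (fun _ => 1) π x
        ≤ (m : ℝ) * s * (pw x * Ind1 f x)
          + (m : ℝ) * ∑ j : Fin m, (pw x * Ind0 f x * (d j x : ℝ)) := by
    intro x
    cases hfx : f x with
    | true =>
      have hInd1 : Ind1 f x = 1 := by simp [Ind1, hfx]
      have hInd0 : Ind0 f x = 0 := by simp [Ind0, hfx]
      rw [hInd1, hInd0]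
      simp only [mul_zero, zero_mul, mul_one]
      rw [Finset.sum_const_zero, mul_zero, add_zero]
      have hcost : naCost n f (fun _ => 1) π x ≤ (m : ℝ) * s := by
        rw [naCost_eq_card]
        have h1 := card_prefixSet_le_n π (naSteps n f π x)
        calc ((prefixSet n π (naSteps n f π x)).card : ℝ)
            ≤ ((m * s : ℕ) : ℝ) := by exact_mod_cast le_trans h1 (le_of_eq hns)
          _ = (m : ℝ) * s := by push_cast; ring
      calc pw x * naCost n f (fun _ => 1) π x ≤ pw x * ((m:ℝ) * s) :=
            mul_le_mul_of_nonneg_left hcost (hpw_nonneg x)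
        _ = (m:ℝ) * s * pw x := by ring
    | false =>
      have hInd1 : Ind1 f x = 0 := by simp [Ind1, hfx]
      have hInd0 : Ind0 f x = 1 := by simp [Ind0, hfx]
      rw [hInd1, hInd0]
      simp only [mul_zero, mul_one, zero_add]
      -- the first-false positions
      have hdfirst : ∀ j : Fin m, ∃ i ∈ prefixSet n π (m * univ.sup (fun j => d j x)),
          i ∈ T j ∧ x i = false := by
        intro j
        obtain ⟨i, hiT, hif⟩ := (false_char hchar x).mp hfx j
        have hiσ : i ∈ sigmaAux p (T j).card (T j) :=
          (sigmaAux_mem p (T j).card (T j) rfl i).mpr hiT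
        obtain ⟨r, iF, hdval, hget, hfF⟩ := dList_first _ ⟨i, hiσ, hif⟩
        have hrlen : r < (sigmaAux p (T j).card (T j)).length :=
          (by obtain ⟨h1, -⟩ := List.getElem?_eq_some_iff.mp hget; exact h1)
        have hrs : r < s := by
          rw [sigmaAux_length p (T j).card (T j) rfl, hcard j] at hrlen
          exact hrlen
        have hRR : d j x ≤ univ.sup (fun j => d j x) :=
          Finset.le_sup (f := fun j => d j x) (mem_univ j)
        have hlt : m * r + (j : ℕ) < m * univ.sup (fun j => d j x) := by
          have hj := j.isLt
          have : r + 1 ≤ univ.sup (fun j => d j x) := by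
            rw [← hdval]; exact hRR
          have h2 : m * (r + 1) ≤ m * univ.sup (fun j => d j x) :=
            Nat.mul_le_mul_left m this
          have h3 : m * r + (j : ℕ) < m * (r + 1) := by rw [Nat.mul_add]; omega
          omega
        have hmem := hπ j r hrs _ hlt
        rw [getD_of_get? hget] at hmem
        refine ⟨iF, hmem, ?_, hfF⟩
        rw [← sigmaAux_mem p (T j).card (T j) rfl]
        exact List.mem_of_getElem? hget
      have hdet : Determines n f (prefixSet n π (m * univ.sup (fun j => d j x))) x := by
        intro x' hagree
        rw [hfx]
        rw [false_char hchar]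
        intro j
        obtain ⟨i, hipre, hiT, hif⟩ := hdfirst j
        exact ⟨i, hiT, by rw [hagree i hipre]; exact hif⟩
      have hsteps : naSteps n f π x ≤ m * univ.sup (fun j => d j x) :=
        Nat.sInf_le hdet
      have hsum : univ.sup (fun j => d j x) ≤ ∑ j : Fin m, d j x :=
        Finset.sup_le (fun j _ => Finset.single_le_sum
          (f := fun j => d j x) (fun _ _ => Nat.zero_le _) (mem_univ j))
      have hcost : naCost n f (fun _ => 1) π x ≤ (m : ℝ) * ∑ j : Fin m, (d j x : ℝ) := by
        rw [naCost_eq_card]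
        have h1 : (prefixSet n π (naSteps n f π x)).card ≤ m * ∑ j : Fin m, d j x :=
          le_trans (le_trans (card_prefixSet_le π _) hsteps)
            (Nat.mul_le_mul_left m hsum)
        calc ((prefixSet n π (naSteps n f π x)).card : ℝ)
            ≤ ((m * ∑ j : Fin m, d j x : ℕ) : ℝ) := by exact_mod_cast h1
          _ = (m : ℝ) * ∑ j : Fin m, (d j x : ℝ) := by push_cast; ring
      calc pw x * naCost n f (fun _ => 1) π x
          ≤ pw x * ((m : ℝ) * ∑ j : Fin m, (d j x : ℝ)) :=
            mul_le_mul_of_nonneg_left hcost (hpw_nonneg x)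
        _ = (m : ℝ) * ∑ j : Fin m, (pw x * (d j x : ℝ)) := by
            simp only [Finset.mul_sum]
            exact Finset.sum_congr rfl (fun j _ => by ring)
  -- the main comparison with any tree computing f
  have main : ∀ t : DecTree n, t.Computes f →
      naExpCost n f (fun _ => 1) p π ≤ (m : ℝ) * adExpCost n (fun _ => 1) p t := by
    intro t ht
    have hA : adExpCost n (fun _ => 1) p t = ∑ x : Fin n → Bool,
        pw x * (costIn univ t x : ℝ) :=
      Finset.sum_congr rfl (fun x _ => by rw [costOn_unit_eq])
    calc naExpCost n f (fun _ => 1) p π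
        = ∑ x : Fin n → Bool, pw x * naCost n f (fun _ => 1) π x := rfl
      _ ≤ ∑ x : Fin n → Bool, ((m : ℝ) * s * (pw x * Ind1 f x)
            + (m : ℝ) * ∑ j : Fin m, (pw x * Ind0 f x * (d j x : ℝ))) :=
          Finset.sum_le_sum (fun x _ => hup x)
      _ = (m : ℝ) * s * (∑ x : Fin n → Bool, pw x * Ind1 f x)
          + (m : ℝ) * ∑ j : Fin m, ∑ x : Fin n → Bool,
              (pw x * Ind0 f x * (d j x : ℝ)) := by
          rw [Finset.sum_add_distrib]
          congr 1
          · rw [← Finset.mul_sum]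
          · rw [← Finset.mul_sum, Finset.sum_comm]
      _ ≤ (m : ℝ) * (∑ x : Fin n → Bool, pw x * Ind1 f x * (costIn univ t x : ℝ))
          + (m : ℝ) * ∑ j : Fin m, ∑ x : Fin n → Bool,
              (pw x * Ind0 f x * (costIn (T j) t x : ℝ)) := by
          have hterm1 : (m : ℝ) * s * (∑ x : Fin n → Bool, pw x * Ind1 f x)
              ≤ (m : ℝ) * (∑ x : Fin n → Bool, pw x * Ind1 f x * (costIn univ t x : ℝ)) := by
            rw [mul_assoc]
            refine mul_le_mul_of_nonneg_left ?_ (by positivity)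
            rw [Finset.mul_sum]
            refine Finset.sum_le_sum (fun x _ => ?_)
            cases hfx : f x with
            | true =>
              have hInd1 : Ind1 f x = 1 := by simp [Ind1, hfx]
              rw [hInd1]
              have := one_input_cost hchar ht hfx hcard
              have h0 := hpw_nonneg x
              nlinarith
            | false =>
              have hInd1 : Ind1 f x = 0 := by simp [Ind1, hfx]
              rw [hInd1]
              simp
          have hterm2 : ∀ j : Fin m, ∑ x : Fin n → Bool,
              (pw x * Ind0 f x * (d j x : ℝ))
              ≤ ∑ x : Fin n → Bool, (pw x * Ind0 f x * (costIn (T j) t x : ℝ)) :=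
            fun j => bridge hp hdisj hchar ht j
          have hterm2' : (m:ℝ) * ∑ j : Fin m, ∑ x : Fin n → Bool,
              (pw x * Ind0 f x * (d j x : ℝ))
              ≤ (m:ℝ) * ∑ j : Fin m, ∑ x : Fin n → Bool,
                  (pw x * Ind0 f x * (costIn (T j) t x : ℝ)) :=
            mul_le_mul_of_nonneg_left
              (Finset.sum_le_sum (fun j _ => hterm2 j)) (by positivity)
          exact add_le_add hterm1 hterm2'
      _ = (m : ℝ) * ∑ x : Fin n → Bool, pw x * (costIn univ t x : ℝ) := by
          rw [← mul_add]
          congr 1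
          rw [Finset.sum_comm]
          rw [← Finset.sum_add_distrib]
          refine Finset.sum_congr rfl (fun x _ => ?_)
          have hsplit : ∑ j : Fin m, (pw x * Ind0 f x * (costIn (T j) t x : ℝ))
              = pw x * Ind0 f x * (costIn univ t x : ℝ) := by
            rw [← costIn_partition hdisj hcover t x, Nat.cast_sum, Finset.mul_sum]
          rw [hsplit]
          cases hfx : f x with
          | true =>
            have h1 : Ind1 f x = 1 := by simp [Ind1, hfx]
            have h0 : Ind0 f x = 0 := by simp [Ind0, hfx]
            rw [h1, h0]; ring
          | false =>
            have h1 : Ind1 f x = 0 := by simp [Ind1, hfx]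
            have h0 : Ind0 f x = 1 := by simp [Ind0, hfx]
            rw [h1, h0]; ring
      _ = (m : ℝ) * adExpCost n (fun _ => 1) p t := by rw [hA]
  -- conclude via the infimum
  obtain ⟨t0, ht0⟩ := exists_tree f
  have hm' : (0:ℝ) < m := by exact_mod_cast hm
  have hinf : naExpCost n f (fun _ => 1) p π / m ≤ OPTA n f (fun _ => 1) p := by
    refine le_csInf ⟨adExpCost n (fun _ => 1) p t0, t0, ht0, rfl⟩ ?_
    rintro r ⟨t, ht, rfl⟩
    rw [div_le_iff₀ hm']
    rw [mul_comm]
    exact main t ht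
  have := (div_le_iff₀ hm').mp hinf
  rw [mul_comm] at this
  exact this
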